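/- With notation as in the context, fix a strictly increasing index sequence I of length r ≥ 1. If χ_I satisfies β(χ_I) = γ(χ_I) + δ(χ_I), then χ_I = a·(S_I − w'_I) for some a ∈ B, where w'_I = w'_{i_1}⋯w'_{i_r} (all in the second factor). -/

import Mathlib

/-!
Common setup: `B` a commutative ℚ-algebra (playing the role of the coefficient
(graded-)commutative algebra), `ι` an ordered index set for a basis `{w_i}` of an
oddly-graded vector space `W`.  Since `W` is concentrated in odd degrees, the free
graded-commutative algebras `B ⊗ ΛW ⊗ ΛW` and `B ⊗ ΛW ⊗ ΛW ⊗ ΛW` are the exterior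
algebras over `B` on the free modules with bases indexed by `ι ⊕ ι` and `ι ⊕ ι ⊕ ι`.
-/

noncomputable section

variable (B : Type) [CommRing B] [Algebra ℚ B] (ι : Type) [LinearOrder ι]

/-- `B ⊗ ΛW ⊗ ΛW` -/
abbrev TwoFold := ExteriorAlgebra B ((ι ⊕ ι) →₀ B)

/-- `B ⊗ ΛW ⊗ ΛW ⊗ ΛW` -/
abbrev ThreeFold := ExteriorAlgebra B ((ι ⊕ ι ⊕ ι) →₀ B)

variable {B ι}

/-- `w_i`, the generator of the first `ΛW` factor of `B ⊗ ΛW ⊗ ΛW`. -/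
def w (i : ι) : TwoFold B ι := ExteriorAlgebra.ι B (Finsupp.single (Sum.inl i) 1)

/-- `w'_i`, the generator of the second `ΛW` factor of `B ⊗ ΛW ⊗ ΛW`. -/
def w' (i : ι) : TwoFold B ι := ExteriorAlgebra.ι B (Finsupp.single (Sum.inr i) 1)

/-- `w_i` in `B ⊗ ΛW ⊗ ΛW ⊗ ΛW`. -/
def u (i : ι) : ThreeFold B ι := ExteriorAlgebra.ι B (Finsupp.single (Sum.inl i) 1)

/-- `w'_i` in `B ⊗ ΛW ⊗ ΛW ⊗ ΛW`. -/
def u' (i : ι) : ThreeFold B ι := ExteriorAlgebra.ι B (Finsupp.single (Sum.inr (Sum.inl i)) 1)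

/-- `w''_i` in `B ⊗ ΛW ⊗ ΛW ⊗ ΛW`. -/
def u'' (i : ι) : ThreeFold B ι := ExteriorAlgebra.ι B (Finsupp.single (Sum.inr (Sum.inr i)) 1)

/-- The `B`-algebra map `B ⊗ ΛW ⊗ ΛW → B ⊗ ΛW ⊗ ΛW ⊗ ΛW` determined by a choice of
(module-valued) images for the generators `w_i`, `w'_i`. -/
def genMap (g : ι ⊕ ι → (ι ⊕ ι ⊕ ι) →₀ B) : TwoFold B ι →ₐ[B] ThreeFold B ι :=
  ExteriorAlgebra.lift B
    ⟨(ExteriorAlgebra.ι B).comp ((Finsupp.lift ((ι ⊕ ι ⊕ ι) →₀ B) B (ι ⊕ ι)) g),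
     fun m => by simp [ExteriorAlgebra.ι_sq_zero]⟩

/-- `α : w ↦ w, w' ↦ w'`. -/
def mapα : TwoFold B ι →ₐ[B] ThreeFold B ι :=
  genMap (Sum.elim (fun i => Finsupp.single (Sum.inl i) 1)
    (fun i => Finsupp.single (Sum.inr (Sum.inl i)) 1))

/-- `β : w ↦ w + w', w' ↦ w''`. -/
def mapβ : TwoFold B ι →ₐ[B] ThreeFold B ι :=
  genMap (Sum.elim
    (fun i => Finsupp.single (Sum.inl i) 1 + Finsupp.single (Sum.inr (Sum.inl i)) 1)
    (fun i => Finsupp.single (Sum.inr (Sum.inr i)) 1))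

/-- `γ : w ↦ w, w' ↦ w' + w''`. -/
def mapγ : TwoFold B ι →ₐ[B] ThreeFold B ι :=
  genMap (Sum.elim (fun i => Finsupp.single (Sum.inl i) 1)
    (fun i => Finsupp.single (Sum.inr (Sum.inl i)) 1 + Finsupp.single (Sum.inr (Sum.inr i)) 1))

/-- `δ : w ↦ w', w' ↦ w''`. -/
def mapδ : TwoFold B ι →ₐ[B] ThreeFold B ι :=
  genMap (Sum.elim (fun i => Finsupp.single (Sum.inr (Sum.inl i)) 1)
    (fun i => Finsupp.single (Sum.inr (Sum.inr i)) 1))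

/-- The monomial `w^ε_I = w_{i_1}^{ε_1} ⋯ w_{i_r}^{ε_r}`, where `w^0 = w` (first factor)
and `w^1 = w'` (second factor). -/
def mono {r : ℕ} (I : Fin r → ι) (ε : Fin r → Bool) : TwoFold B ι :=
  (List.ofFn fun j => if ε j then w' (I j) else w (I j)).prod

/-- `S_I = (w_{i_1} + w'_{i_1}) ⋯ (w_{i_r} + w'_{i_r})`. -/
def SI {r : ℕ} (I : Fin r → ι) : TwoFold B ι :=
  (List.ofFn fun j => w (I j) + w' (I j)).prod

section Aux1
open CliffordAlgebra

variable {R M : Type*} [CommRing R] [AddCommGroup M] [Module R M]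

lemma contract_ofFn_zero (d : Module.Dual R M) {r : ℕ} (v : Fin r → M)
    (h : ∀ j, d (v j) = 0) :
    contractLeft (Q := (0 : QuadraticForm R M)) d
      (List.ofFn fun j => ExteriorAlgebra.ι R (v j)).prod = 0 := by
  induction r with
  | zero => simpa using contractLeft_one (0 : QuadraticForm R M) d
  | succ r ih =>
    rw [List.ofFn_succ, List.prod_cons, contractLeft_ι_mul, h 0,
      ih (fun j => v j.succ) (fun j => h j.succ), zero_smul, mul_zero, sub_zero]

/-- Iterated left contraction. -/
def contrAll : List (Module.Dual R M) → ExteriorAlgebra R M →ₗ[R] ExteriorAlgebra R M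
  | [] => LinearMap.id
  | d :: D => (contrAll D).comp (contractLeft (Q := (0 : QuadraticForm R M)) d)

@[simp] lemma contrAll_nil (x : ExteriorAlgebra R M) : contrAll [] x = x := rfl

@[simp] lemma contrAll_cons (d : Module.Dual R M) (D : List (Module.Dual R M))
    (x : ExteriorAlgebra R M) :
    contrAll (d :: D) x = contrAll D (contractLeft (Q := (0 : QuadraticForm R M)) d x) := rfl

lemma contrAll_ofFn {r : ℕ} (d : Fin r → Module.Dual R M) (v : Fin r → M)
    (h : ∀ j k : Fin r, j < k → d j (v k) = 0) :
    contrAll (List.ofFn d) (List.ofFn fun j => ExteriorAlgebra.ι R (v j)).prod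
      = algebraMap R _ (∏ j, d j (v j)) := by
  induction r with
  | zero => simp
  | succ r ih =>
    rw [List.ofFn_succ, List.ofFn_succ, List.prod_cons, contrAll_cons, contractLeft_ι_mul,
      contract_ofFn_zero (d 0) (fun j => v j.succ) (fun j => h 0 j.succ j.succ_pos),
      mul_zero, sub_zero, map_smul,
      ih (fun j => d j.succ) (fun j => v j.succ)
        (fun j k hjk => h j.succ k.succ (by simpa using hjk)),
      Fin.prod_univ_succ, Algebra.smul_def, ← map_mul]

lemma algebraMapInv_contrAll_ofFn {r : ℕ} (d : Fin r → Module.Dual R M) (v : Fin r → M)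
    (h : ∀ j k : Fin r, j < k → d j (v k) = 0) :
    ExteriorAlgebra.algebraMapInv
      (contrAll (List.ofFn d) (List.ofFn fun j => ExteriorAlgebra.ι R (v j)).prod)
      = ∏ j, d j (v j) := by
  rw [contrAll_ofFn d v h]
  exact ExteriorAlgebra.algebraMap_leftInverse M _

end Aux1
-- appended after base defs
section Aux2
variable {B ι : Type} [CommRing B] [Algebra ℚ B] [LinearOrder ι]

/-- The three copies of the generator index. -/
def pos3 : Fin 3 → ι → ι ⊕ ι ⊕ ι
  | 0, i => Sum.inl i
  | 1, i => Sum.inr (Sum.inl i)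
  | 2, i => Sum.inr (Sum.inr i)

lemma pos3_eq_iff (e e' : Fin 3) (i i' : ι) :
    pos3 e i = pos3 e' i' ↔ e = e' ∧ i = i' := by
  fin_cases e <;> fin_cases e' <;> simp [pos3]

/-- Dual-basis functional. -/
def dual3 (e : Fin 3) (i : ι) : Module.Dual B ((ι ⊕ ι ⊕ ι) →₀ B) :=
  Finsupp.lapply (pos3 e i)

@[simp] lemma dual3_single (e e' : Fin 3) (i i' : ι) :
    dual3 (B := B) e i (Finsupp.single (pos3 e' i') 1)
      = if e' = e ∧ i' = i then 1 else 0 := by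
  rw [dual3, Finsupp.lapply_apply, Finsupp.single_apply]
  simp only [pos3_eq_iff]

lemma genMap_w (g : ι ⊕ ι → (ι ⊕ ι ⊕ ι) →₀ B) (i : ι) :
    genMap g (w i) = ExteriorAlgebra.ι B (g (Sum.inl i)) := by
  rw [genMap, w, ExteriorAlgebra.lift_ι_apply]
  simp

lemma genMap_w' (g : ι ⊕ ι → (ι ⊕ ι ⊕ ι) →₀ B) (i : ι) :
    genMap g (w' i) = ExteriorAlgebra.ι B (g (Sum.inr i)) := by
  rw [genMap, w', ExteriorAlgebra.lift_ι_apply]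
  simp

end Aux2
section Aux3
variable {B ι : Type} [CommRing B] [Algebra ℚ B] [LinearOrder ι]

/-- Image vectors of the generators under β. -/
def vβ : Bool → ι → (ι ⊕ ι ⊕ ι) →₀ B
  | true, i => Finsupp.single (pos3 2 i) 1
  | false, i => Finsupp.single (pos3 0 i) 1 + Finsupp.single (pos3 1 i) 1

def vγ : Bool → ι → (ι ⊕ ι ⊕ ι) →₀ B
  | true, i => Finsupp.single (pos3 1 i) 1 + Finsupp.single (pos3 2 i) 1
  | false, i => Finsupp.single (pos3 0 i) 1

def vδ : Bool → ι → (ι ⊕ ι ⊕ ι) →₀ B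
  | true, i => Finsupp.single (pos3 2 i) 1
  | false, i => Finsupp.single (pos3 1 i) 1

def sβ (e : Fin 3) (b : Bool) : B := if b = decide (e = 2) then 1 else 0
def sγ (e : Fin 3) (b : Bool) : B := if b = !decide (e = 0) then 1 else 0
def sδ (e : Fin 3) (b : Bool) : B := if b = decide (e = 2) ∧ ¬(e = 0) then 1 else 0

lemma dual3_vβ (e : Fin 3) (b : Bool) (i i' : ι) :
    dual3 (B := B) e i (vβ b i') = if i' = i then sβ e b else 0 := by
  cases b <;> fin_cases e <;>
    simp [vβ, sβ, map_add, dual3_single, pos3_eq_iff]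

lemma dual3_vγ (e : Fin 3) (b : Bool) (i i' : ι) :
    dual3 (B := B) e i (vγ b i') = if i' = i then sγ e b else 0 := by
  cases b <;> fin_cases e <;>
    simp [vγ, sγ, map_add, dual3_single, pos3_eq_iff]

lemma dual3_vδ (e : Fin 3) (b : Bool) (i i' : ι) :
    dual3 (B := B) e i (vδ b i') = if i' = i then sδ e b else 0 := by
  cases b <;> fin_cases e <;>
    simp [vδ, sδ, map_add, dual3_single, pos3_eq_iff]

lemma mapβ_mono {r : ℕ} (I : Fin r → ι) (ε : Fin r → Bool) :
    mapβ (mono I ε : TwoFold B ι)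
      = (List.ofFn fun j => ExteriorAlgebra.ι B (vβ (ε j) (I j))).prod := by
  rw [mono, map_list_prod, List.map_ofFn]
  refine congrArg List.prod (congrArg List.ofFn (funext fun j => ?_))
  cases hj : ε j <;>
    simp [Function.comp, hj, mapβ, genMap_w, genMap_w', vβ, pos3]

lemma mapγ_mono {r : ℕ} (I : Fin r → ι) (ε : Fin r → Bool) :
    mapγ (mono I ε : TwoFold B ι)
      = (List.ofFn fun j => ExteriorAlgebra.ι B (vγ (ε j) (I j))).prod := by
  rw [mono, map_list_prod, List.map_ofFn]
  refine congrArg List.prod (congrArg List.ofFn (funext fun j => ?_))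
  cases hj : ε j <;>
    simp [Function.comp, hj, mapγ, genMap_w, genMap_w', vγ, pos3]

lemma mapδ_mono {r : ℕ} (I : Fin r → ι) (ε : Fin r → Bool) :
    mapδ (mono I ε : TwoFold B ι)
      = (List.ofFn fun j => ExteriorAlgebra.ι B (vδ (ε j) (I j))).prod := by
  rw [mono, map_list_prod, List.map_ofFn]
  refine congrArg List.prod (congrArg List.ofFn (funext fun j => ?_))
  cases hj : ε j <;>
    simp [Function.comp, hj, mapδ, genMap_w, genMap_w', vδ, pos3]

end Aux3
section Aux4
variable {B ι : Type} [CommRing B] [Algebra ℚ B] [LinearOrder ι]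

lemma key_eval {r : ℕ} (I : Fin r → ι) (hI : Function.Injective I)
    (a : (Fin r → Bool) → B) (t : Fin r → Fin 3)
    (v : Bool → ι → (ι ⊕ ι ⊕ ι) →₀ B) (s : Fin 3 → Bool → B)
    (hv : ∀ (e : Fin 3) (b : Bool) (i i' : ι),
      dual3 (B := B) e i (v b i') = if i' = i then s e b else 0)
    (F : TwoFold B ι →ₐ[B] ThreeFold B ι)
    (hF : ∀ ε : Fin r → Bool,
      F (mono I ε) = (List.ofFn fun j => ExteriorAlgebra.ι B (v (ε j) (I j))).prod) :
    ExteriorAlgebra.algebraMapInv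
      ((contrAll (List.ofFn fun j => dual3 (t j) (I j)))
        (F (∑ ε : Fin r → Bool, a ε • mono I ε)))
      = ∑ ε : Fin r → Bool, a ε * ∏ j, s (t j) (ε j) := by
  rw [map_sum, map_sum, map_sum]
  refine Finset.sum_congr rfl fun ε _ => ?_
  rw [map_smul, map_smul, map_smul, hF ε,
    algebraMapInv_contrAll_ofFn _ _
      (fun j k hjk => by rw [hv, if_neg fun hh => hjk.ne' (hI hh)])]
  simp [hv, smul_eq_mul]

lemma prod_indicator01 {r : ℕ} (P : Fin r → Prop) [DecidablePred P] :
    (∏ j, if P j then (1 : B) else 0) = if ∀ j, P j then 1 else 0 := by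
  by_cases h : ∀ j, P j
  · simp [h]
  · rw [if_neg h]
    push_neg at h
    obtain ⟨j, hj⟩ := h
    exact Finset.prod_eq_zero (Finset.mem_univ j) (if_neg hj)

lemma sum_mul_indicator {r : ℕ} (a : (Fin r → Bool) → B) (ε₀ : Fin r → Bool)
    (C : Prop) [Decidable C] :
    (∑ ε : Fin r → Bool, a ε * if ε = ε₀ ∧ C then 1 else 0) = if C then a ε₀ else 0 := by
  by_cases hC : C <;> simp [hC, mul_ite, Finset.sum_ite_eq']

lemma sum_sβ {r : ℕ} (a : (Fin r → Bool) → B) (t : Fin r → Fin 3) :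
    (∑ ε : Fin r → Bool, a ε * ∏ j, sβ (t j) (ε j))
      = a fun j => decide (t j = 2) := by
  have := sum_mul_indicator a (fun j => decide (t j = 2)) True
  rw [if_pos trivial] at this
  rw [← this]
  refine Finset.sum_congr rfl fun ε _ => ?_
  congr 1
  simp only [sβ, and_true]
  rw [prod_indicator01 (fun j => ε j = decide (t j = 2))]
  simp only [← funext_iff]

lemma sum_sγ {r : ℕ} (a : (Fin r → Bool) → B) (t : Fin r → Fin 3) :
    (∑ ε : Fin r → Bool, a ε * ∏ j, sγ (t j) (ε j))
      = a fun j => !decide (t j = 0) := by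
  have := sum_mul_indicator a (fun j => !decide (t j = 0)) True
  rw [if_pos trivial] at this
  rw [← this]
  refine Finset.sum_congr rfl fun ε _ => ?_
  congr 1
  simp only [sγ, and_true]
  rw [prod_indicator01 (fun j => ε j = !decide (t j = 0))]
  simp only [← funext_iff]

lemma sum_sδ {r : ℕ} (a : (Fin r → Bool) → B) (t : Fin r → Fin 3) :
    (∑ ε : Fin r → Bool, a ε * ∏ j, sδ (t j) (ε j))
      = if ∀ j, ¬ t j = 0 then a fun j => decide (t j = 2) else 0 := by
  rw [← sum_mul_indicator a (fun j => decide (t j = 2)) (∀ j, ¬ t j = 0)]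
  refine Finset.sum_congr rfl fun ε _ => ?_
  congr 1
  simp only [sδ]
  rw [prod_indicator01 (fun j => ε j = decide (t j = 2) ∧ ¬ t j = 0)]
  simp only [forall_and, ← funext_iff]

lemma prod_add_expand {A : Type*} [Ring A] {r : ℕ} (f g : Fin r → A) :
    (List.ofFn fun j => f j + g j).prod
      = ∑ ε : Fin r → Bool, (List.ofFn fun j => if ε j then g j else f j).prod := by
  induction r with
  | zero => simp
  | succ r ih =>
    rw [List.ofFn_succ, List.prod_cons, ih (fun j => f j.succ) (fun j => g j.succ),
      Fintype.sum_equiv (Fin.consEquiv (fun _ : Fin (r + 1) => Bool)).symm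
        (fun ε => (List.ofFn fun j => if ε j then g j else f j).prod)
        (fun p => (if p.1 then g 0 else f 0) *
          (List.ofFn fun j : Fin r => if p.2 j then g j.succ else f j.succ).prod)
        (fun ε => by
          simp only [Fin.consEquiv, Equiv.coe_fn_symm_mk, List.ofFn_succ, List.prod_cons]
          rfl)]
    rw [Fintype.sum_prod_type, Fintype.sum_bool]
    dsimp only
    simp only [Bool.false_eq_true, if_true, if_false, ← Finset.mul_sum]
    rw [← add_mul, add_comm (g 0)]

end Aux4
/-- Lemma `alpha beta gamma`, part (B): for a strictly increasing index
sequence `I` of length `r ≥ 1`, if `χ_I` satisfies `β(χ_I) = γ(χ_I) + δ(χ_I)`, then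
`χ_I = a • (S_I − w'_I)` for some `a ∈ B`, where `w'_I = w'_{i_1}⋯w'_{i_r}`
(second factor). -/
theorem stmt5 (r : ℕ) (hr : 1 ≤ r) (I : Fin r → ι) (hI : StrictMono I)
    (a : (Fin r → Bool) → B)
    (h : mapβ (∑ ε : Fin r → Bool, a ε • mono I ε : TwoFold B ι) =
      mapγ (∑ ε : Fin r → Bool, a ε • mono I ε) +
        mapδ (∑ ε : Fin r → Bool, a ε • mono I ε)) :
    ∃ c : B, (∑ ε : Fin r → Bool, a ε • mono I ε : TwoFold B ι) =
      c • (SI I - mono I (fun _ => true)) := by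
  have hInj : Function.Injective I := hI.injective
  -- The family of scalar equations obtained by applying coefficient functionals.
  have E : ∀ t : Fin r → Fin 3,
      (a fun j => decide (t j = 2)) =
        (a fun j => !decide (t j = 0)) +
          if ∀ j, ¬ t j = 0 then a fun j => decide (t j = 2) else 0 := by
    intro t
    have hβ := key_eval I hInj a t vβ sβ dual3_vβ mapβ (mapβ_mono I)
    have hγ := key_eval I hInj a t vγ sγ dual3_vγ mapγ (mapγ_mono I)
    have hδ := key_eval I hInj a t vδ sδ dual3_vδ mapδ (mapδ_mono I)
    have key := congrArg (fun x => ExteriorAlgebra.algebraMapInv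
      ((contrAll (List.ofFn fun j => dual3 (t j) (I j))) x)) h
    simp only [map_add] at key
    rw [hβ, hγ, hδ, sum_sβ, sum_sγ, sum_sδ] at key
    exact key
  set c := a (fun _ => false) with hc
  have htrue : a (fun _ => true) = 0 := by
    have h1 := E (fun _ => 1)
    have e1 : (fun (_ : Fin r) => decide ((1 : Fin 3) = 2)) = (fun _ => false) := by
      funext j; decide
    have e2 : (fun (_ : Fin r) => !decide ((1 : Fin 3) = 0)) = (fun _ => true) := by
      funext j; decide
    rw [e1, e2, if_pos (fun j => by decide)] at h1
    linear_combination -h1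
  have hother : ∀ ε : Fin r → Bool, ε ≠ (fun _ => true) → a ε = c := by
    intro ε hε
    obtain ⟨j0, hj0⟩ := Function.ne_iff.mp hε
    have hj0' : ε j0 = false := by simpa using hj0
    have h1 := E (fun j => if ε j then 1 else 0)
    have e1 : (fun j => decide ((if ε j then (1 : Fin 3) else 0) = 2)) = (fun _ => false) := by
      funext j; cases ε j <;> simp
    have e2 : (fun j => !decide ((if ε j then (1 : Fin 3) else 0) = 0)) = ε := by
      funext j; cases ε j <;> simp
    have e3 : ¬ ∀ j, ¬ (if ε j then (1 : Fin 3) else 0) = 0 := by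
      intro hcon
      exact hcon j0 (by rw [hj0']; simp)
    rw [e1, e2, if_neg e3, add_zero] at h1
    exact h1.symm
  refine ⟨c, ?_⟩
  have hSI : SI (B := B) I = ∑ ε : Fin r → Bool, mono I ε := by
    simp only [SI, mono]
    exact prod_add_expand _ _
  have step : ∀ ε : Fin r → Bool,
      a ε • mono I ε =
        c • mono I ε - (if ε = (fun _ => true) then c else 0) • (mono I ε : TwoFold B ι) := by
    intro ε
    by_cases hε : ε = (fun _ => true)
    · rw [hε, htrue, if_pos rfl, zero_smul, sub_self]
    · rw [hother ε hε, if_neg hε, zero_smul, sub_zero]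
  calc (∑ ε : Fin r → Bool, a ε • mono I ε : TwoFold B ι)
      = ∑ ε : Fin r → Bool,
          (c • mono I ε - (if ε = (fun _ => true) then c else 0) • mono I ε) :=
        Finset.sum_congr rfl fun ε _ => step ε
    _ = c • SI I - c • mono I (fun _ => true) := by
        rw [Finset.sum_sub_distrib, ← Finset.smul_sum, ← hSI]
        congr 1
        simp [ite_smul, Finset.sum_ite_eq']
    _ = c • (SI I - mono I (fun _ => true)) := (smul_sub _ _ _).symm
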